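/- arXiv:2411.06941 — 2 statements merged into one kernel-verified Lean document; each statement's English description precedes it below -/
import Mathlib

section
/- Let G be a finite simple graph on n ≥ 1 vertices with at least one edge and let d ≥ 0 be an integer. If equality holds in the d-improper Hoffman bound, i.e. χ^d(G) = (λ₁ − λₙ)/(d − λₙ) = m, then λₙ has multiplicity at least m − 1 as an eigenvalue of the adjacency matrix of G. -/
open SimpleGraph Finset Matrix

namespace ImproperPaper

variable {V W : Type*}

/-- The strong product of two simple graphs. -/
def strongProd (G : SimpleGraph V) (H : SimpleGraph W) : SimpleGraph (V × W) where
  Adj p q := (p.1 = q.1 ∧ H.Adj p.2 q.2) ∨ (G.Adj p.1 q.1 ∧ p.2 = q.2) ∨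
    (G.Adj p.1 q.1 ∧ H.Adj p.2 q.2)
  symm := by
    constructor
    rintro ⟨a, b⟩ ⟨x, y⟩ (⟨h1, h2⟩ | ⟨h1, h2⟩ | ⟨h1, h2⟩)
    · exact Or.inl ⟨h1.symm, h2.symm⟩
    · exact Or.inr (Or.inl ⟨h1.symm, h2.symm⟩)
    · exact Or.inr (Or.inr ⟨h1.symm, h2.symm⟩)
  loopless := by
    constructor
    rintro ⟨a, b⟩ (⟨h1, h2⟩ | ⟨h1, h2⟩ | ⟨h1, h2⟩)
    · exact H.ne_of_adj h2 rfl
    · exact G.ne_of_adj h1 rfl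
    · exact G.ne_of_adj h1 rfl

/-- The lexicographical product of two simple graphs. -/
def lexProd (G : SimpleGraph V) (H : SimpleGraph W) : SimpleGraph (V × W) where
  Adj p q := G.Adj p.1 q.1 ∨ (p.1 = q.1 ∧ H.Adj p.2 q.2)
  symm := by
    constructor
    rintro ⟨a, b⟩ ⟨x, y⟩ (h | ⟨h1, h2⟩)
    · exact Or.inl h.symm
    · exact Or.inr ⟨h1.symm, h2.symm⟩
  loopless := by
    constructor
    rintro ⟨a, b⟩ (h | ⟨h1, h2⟩)
    · exact G.ne_of_adj h rfl
    · exact H.ne_of_adj h2 rfl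

instance {G : SimpleGraph V} {H : SimpleGraph W} [DecidableEq V] [DecidableEq W]
    [DecidableRel G.Adj] [DecidableRel H.Adj] : DecidableRel (strongProd G H).Adj := fun p q =>
  show Decidable ((p.1 = q.1 ∧ H.Adj p.2 q.2) ∨ (G.Adj p.1 q.1 ∧ p.2 = q.2) ∨
    (G.Adj p.1 q.1 ∧ H.Adj p.2 q.2)) from inferInstance

/-- A colouring is `d`-improper if every colour class induces a subgraph of
maximum degree at most `d`. -/
def IsImproperColoring (G : SimpleGraph V) (d : ℕ) {α : Type*} (c : V → α) : Prop :=
  ∀ v : V, ({w | G.Adj v w ∧ c w = c v} : Set V).ncard ≤ d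

/-- The `d`-improper chromatic number. -/
noncomputable def improperChromaticNumber (G : SimpleGraph V) (d : ℕ) : ℕ :=
  sInf {n | ∃ c : V → Fin n, IsImproperColoring G d c}

/-- A colouring is `t`-clustered if every monochromatic connected component has at
most `t` vertices. -/
def IsClusteredColoring (G : SimpleGraph V) (t : ℕ) {α : Type*} (c : V → α) : Prop :=
  ∀ v : V,
    ({w | Relation.ReflTransGen (fun a b => G.Adj a b ∧ c a = c b) v w} : Set V).ncard ≤ t

/-- The `t`-clustered chromatic number. -/
noncomputable def clusteredChromaticNumber (G : SimpleGraph V) (t : ℕ) : ℕ :=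
  sInf {n | ∃ c : V → Fin n, IsClusteredColoring G t c}

/-- The chromatic number: least `n` admitting a proper colouring with `n` colours. -/
noncomputable def chromNum (G : SimpleGraph V) : ℕ :=
  sInf {n | ∃ c : V → Fin n, ∀ u v, G.Adj u v → c u ≠ c v}

/-- The `b`-fold `d`-improper chromatic number: least number of colours in an assignment
of `b` colours to each vertex such that, for every colour `x`, the set of vertices whose
colour set contains `x` induces a subgraph of maximum degree at most `d`. -/
noncomputable def bFoldImproperChromaticNumber (G : SimpleGraph V) (b d : ℕ) : ℕ :=
  sInf {n | ∃ c : V → Finset (Fin n), (∀ v, (c v).card = b) ∧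
    ∀ v : V, ∀ x ∈ c v, ({w | G.Adj v w ∧ x ∈ c w} : Set V).ncard ≤ d}

/-- The (proper) `b`-fold chromatic number. -/
noncomputable def bFoldChromaticNumber (G : SimpleGraph V) (b : ℕ) : ℕ :=
  bFoldImproperChromaticNumber G b 0

/-- The `b`-fold `t`-clustered chromatic number. -/
noncomputable def bFoldClusteredChromaticNumber (G : SimpleGraph V) (b t : ℕ) : ℕ :=
  sInf {n | ∃ c : V → Finset (Fin n), (∀ v, (c v).card = b) ∧
    ∀ x : Fin n, ∀ v : V, x ∈ c v →
      ({w | Relation.ReflTransGen (fun a b' => G.Adj a b' ∧ x ∈ c a ∧ x ∈ c b') v w} :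
        Set V).ncard ≤ t}

/-- The fractional chromatic number `χ_f(G) = inf { χ_b(G)/b : b ≥ 1 }`. -/
noncomputable def fracChromaticNumber (G : SimpleGraph V) : ℝ :=
  sInf {x : ℝ | ∃ b : ℕ, 0 < b ∧ x = (bFoldChromaticNumber G b : ℝ) / b}

/-- The fractional `d`-improper chromatic number. -/
noncomputable def fracImproperChromaticNumber (G : SimpleGraph V) (d : ℕ) : ℝ :=
  sInf {x : ℝ | ∃ b : ℕ, 0 < b ∧ x = (bFoldImproperChromaticNumber G b d : ℝ) / b}

/-- The fractional `t`-clustered chromatic number. -/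
noncomputable def fracClusteredChromaticNumber (G : SimpleGraph V) (t : ℕ) : ℝ :=
  sInf {x : ℝ | ∃ b : ℕ, 0 < b ∧ x = (bFoldClusteredChromaticNumber G b t : ℝ) / b}

/-- `lam` lists the eigenvalues of the Hermitian matrix `A` (with multiplicity) in
non-increasing order. -/
def IsEigList {n : ℕ} {A : Matrix (Fin n) (Fin n) ℝ} (hA : A.IsHermitian)
    (lam : Fin n → ℝ) : Prop :=
  Antitone lam ∧ ∃ σ : Equiv.Perm (Fin n), lam = hA.eigenvalues ∘ σ

/-- The largest size of a vertex subset inducing a subgraph of maximum degree at most `d`. -/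
noncomputable def maxImproperIndep (G : SimpleGraph V) (d : ℕ) : ℕ :=
  sSup {k | ∃ s : Set V, s.ncard = k ∧ ∀ v ∈ s, ({w | w ∈ s ∧ G.Adj v w} : Set V).ncard ≤ d}

end ImproperPaper

namespace SpecAux

variable {n : ℕ} {A : Matrix (Fin n) (Fin n) ℝ} (hA : A.IsHermitian)

noncomputable def evec (i : Fin n) : Fin n → ℝ := ⇑(hA.eigenvectorBasis i)

lemma evec_dot (i j : Fin n) : evec hA i ⬝ᵥ evec hA j = if i = j then 1 else 0 := by
  have h := orthonormal_iff_ite.mp (hA.eigenvectorBasis).orthonormal i j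
  rw [EuclideanSpace.inner_eq_star_dotProduct] at h
  rw [dotProduct_comm]
  simpa [evec, star_trivial] using h

lemma mulVec_evec (i : Fin n) : A *ᵥ evec hA i = hA.eigenvalues i • evec hA i :=
  hA.mulVec_eigenvectorBasis i

lemma sum_repr (x : Fin n → ℝ) : ∑ i, (evec hA i ⬝ᵥ x) • evec hA i = x := by
  have h := (hA.eigenvectorBasis).sum_repr' ((WithLp.equiv 2 _).symm x)
  have h2 : ∀ i, (inner ℝ (hA.eigenvectorBasis i) ((WithLp.equiv 2 (Fin n → ℝ)).symm x) : ℝ)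
      = evec hA i ⬝ᵥ x := by
    intro i
    rw [EuclideanSpace.inner_eq_star_dotProduct, dotProduct_comm]
    rfl
  calc ∑ i, (evec hA i ⬝ᵥ x) • evec hA i
      = (WithLp.equiv 2 (Fin n → ℝ)) (∑ i, (inner ℝ (hA.eigenvectorBasis i)
          ((WithLp.equiv 2 (Fin n → ℝ)).symm x) : ℝ) • hA.eigenvectorBasis i) := by
        simp only [h2]; simp [evec]
    _ = x := by rw [h]; rfl

lemma dot_symm (hA : A.IsHermitian) (x y : Fin n → ℝ) : x ⬝ᵥ (A *ᵥ y) = (A *ᵥ x) ⬝ᵥ y := by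
  rw [Matrix.dotProduct_mulVec, ← Matrix.mulVec_transpose]
  congr 1
  have hAt : Aᵀ = A := by
    ext i j
    have h := congrFun (congrFun hA i) j
    simpa [Matrix.conjTranspose_apply] using h
  rw [hAt]


lemma sum_dot {ι : Type*} (s : Finset ι) (f : ι → (Fin n → ℝ)) (v : Fin n → ℝ) :
    (∑ i ∈ s, f i) ⬝ᵥ v = ∑ i ∈ s, f i ⬝ᵥ v := by
  classical
  induction s using Finset.induction_on with
  | empty => simp [zero_dotProduct]
  | @insert a s h ih => rw [Finset.sum_insert h, Finset.sum_insert h, add_dotProduct, ih]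

lemma mulVec_sum' {ι : Type*} (s : Finset ι) (f : ι → (Fin n → ℝ)) :
    A *ᵥ (∑ i ∈ s, f i) = ∑ i ∈ s, A *ᵥ f i := by
  classical
  induction s using Finset.induction_on with
  | empty => simp [Matrix.mulVec_zero]
  | @insert a s h ih => rw [Finset.sum_insert h, Finset.sum_insert h, Matrix.mulVec_add, ih]

lemma evec_dot_mulVec (x : Fin n → ℝ) (i : Fin n) :
    evec hA i ⬝ᵥ (A *ᵥ x) = hA.eigenvalues i * (evec hA i ⬝ᵥ x) := by
  rw [dot_symm hA, mulVec_evec, smul_dotProduct, smul_eq_mul]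

lemma dot_self_eq_sum (x : Fin n → ℝ) : x ⬝ᵥ x = ∑ i, (evec hA i ⬝ᵥ x) ^ 2 := by
  nth_rewrite 1 [← sum_repr hA x]
  rw [sum_dot]
  refine Finset.sum_congr rfl fun i _ => ?_
  rw [smul_dotProduct, smul_eq_mul, dotProduct_comm, sq]

lemma dot_mulVec_eq_sum (x : Fin n → ℝ) :
    x ⬝ᵥ (A *ᵥ x) = ∑ i, hA.eigenvalues i * (evec hA i ⬝ᵥ x) ^ 2 := by
  nth_rewrite 1 [← sum_repr hA x]
  rw [sum_dot]
  refine Finset.sum_congr rfl fun i _ => ?_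
  rw [smul_dotProduct, smul_eq_mul, evec_dot_mulVec hA, sq]
  ring

lemma rayleigh_lower {mu : ℝ} (hmu : ∀ i, mu ≤ hA.eigenvalues i) (x : Fin n → ℝ) :
    mu * (x ⬝ᵥ x) ≤ x ⬝ᵥ (A *ᵥ x) := by
  rw [dot_mulVec_eq_sum hA, dot_self_eq_sum hA, Finset.mul_sum]
  exact Finset.sum_le_sum fun i _ => mul_le_mul_of_nonneg_right (hmu i) (sq_nonneg _)

lemma eigen_of_rayleigh_eq {mu : ℝ} (hmu : ∀ i, mu ≤ hA.eigenvalues i) (x : Fin n → ℝ)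
    (hx : x ⬝ᵥ (A *ᵥ x) = mu * (x ⬝ᵥ x)) : A *ᵥ x = mu • x := by
  have hz : ∀ i ∈ Finset.univ, (hA.eigenvalues i - mu) * (evec hA i ⬝ᵥ x) ^ 2 = 0 := by
    rw [← Finset.sum_eq_zero_iff_of_nonneg
      (fun i _ => mul_nonneg (by linarith [hmu i]) (sq_nonneg _))]
    have : ∑ i, (hA.eigenvalues i - mu) * (evec hA i ⬝ᵥ x) ^ 2
        = x ⬝ᵥ (A *ᵥ x) - mu * (x ⬝ᵥ x) := by
      rw [dot_mulVec_eq_sum hA, dot_self_eq_sum hA, Finset.mul_sum, ← Finset.sum_sub_distrib]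
      refine Finset.sum_congr rfl fun i _ => by ring
    rw [this, hx, sub_self]
  have key : ∀ i, hA.eigenvalues i ≠ mu → evec hA i ⬝ᵥ x = 0 := by
    intro i hi
    have := hz i (Finset.mem_univ i)
    rcases mul_eq_zero.mp this with h | h
    · exact absurd (by linarith [sub_eq_zero.mp h] : hA.eigenvalues i = mu) hi
    · exact pow_eq_zero_iff (by norm_num) |>.mp h
  nth_rewrite 1 [← sum_repr hA x]
  rw [mulVec_sum']
  conv_rhs => rw [← sum_repr hA x, Finset.smul_sum]
  refine Finset.sum_congr rfl fun i _ => ?_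
  rw [Matrix.mulVec_smul, mulVec_evec]
  by_cases hi : hA.eigenvalues i = mu
  · rw [hi, smul_comm]
  · rw [key i hi]
    simp

lemma card_eig {mu : ℝ} {ι : Type*} [Fintype ι] (u : ι → (Fin n → ℝ))
    (hu : LinearIndependent ℝ u) (heig : ∀ j, A *ᵥ u j = mu • u j) :
    Fintype.card ι ≤ (Finset.univ.filter (fun i => hA.eigenvalues i = mu)).card := by
  classical
  set S : Finset (Fin n) := Finset.univ.filter (fun i => hA.eigenvalues i = mu) with hS
  have hspan : ∀ j, u j ∈ Submodule.span ℝ ((S.image (evec hA) : Finset (Fin n → ℝ)) :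
      Set (Fin n → ℝ)) := by
    intro j
    have hcoef : ∀ i, i ∉ S → (evec hA i ⬝ᵥ u j) • evec hA i = 0 := by
      intro i hi
      have hne : hA.eigenvalues i ≠ mu := by
        simpa [hS] using hi
      have h1 : evec hA i ⬝ᵥ (A *ᵥ u j) = hA.eigenvalues i * (evec hA i ⬝ᵥ u j) :=
        evec_dot_mulVec hA _ i
      rw [heig j] at h1
      have h2 : mu * (evec hA i ⬝ᵥ u j) = hA.eigenvalues i * (evec hA i ⬝ᵥ u j) := by
        simpa [dotProduct_smul] using h1
      have : evec hA i ⬝ᵥ u j = 0 := by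
        by_contra hne2
        exact hne (mul_right_cancel₀ hne2 h2.symm)
      rw [this, zero_smul]
    have : u j = ∑ i ∈ S, (evec hA i ⬝ᵥ u j) • evec hA i := by
      conv_lhs => rw [← sum_repr hA (u j)]
      exact (Finset.sum_subset (Finset.subset_univ S) (fun i _ hi => hcoef i hi)).symm
    rw [this]
    exact Submodule.sum_mem _ fun i hi => Submodule.smul_mem _ _
      (Submodule.subset_span (Finset.mem_image_of_mem _ hi))
  have h1 : Fintype.card ι = Module.finrank ℝ (Submodule.span ℝ (Set.range u)) :=
    (finrank_span_eq_card hu).symm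
  have h2 : Submodule.span ℝ (Set.range u) ≤ Submodule.span ℝ
      ((S.image (evec hA) : Finset (Fin n → ℝ)) : Set (Fin n → ℝ)) := by
    rw [Submodule.span_le]
    rintro _ ⟨j, rfl⟩
    exact hspan j
  calc Fintype.card ι = Module.finrank ℝ (Submodule.span ℝ (Set.range u)) := h1
    _ ≤ Module.finrank ℝ (Submodule.span ℝ ((S.image (evec hA) : Finset (Fin n → ℝ)) :
        Set (Fin n → ℝ))) := Submodule.finrank_mono h2
    _ ≤ (S.image (evec hA)).card := finrank_span_finset_le_card _
    _ ≤ S.card := Finset.card_image_le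


lemma class_bound {G : SimpleGraph (Fin n)} [DecidableRel G.Adj] {d : ℕ} {M : ℕ}
    {c : Fin n → Fin M}
    (hc : ∀ v, ({w | G.Adj v w ∧ c w = c v} : Set (Fin n)).ncard ≤ d)
    (y : Fin n → ℝ) (k : Fin M) (hy : ∀ v, y v ≠ 0 → c v = k) :
    y ⬝ᵥ ((G.adjMatrix ℝ) *ᵥ y) ≤ d * (y ⬝ᵥ y) := by
  classical
  rw [SimpleGraph.dotProduct_mulVec_adjMatrix]
  have step1 : ∀ v w : Fin n, (if G.Adj v w then y v * y w else 0)
      ≤ (if G.Adj v w ∧ y v ≠ 0 ∧ y w ≠ 0 then (y v ^ 2 + y w ^ 2) / 2 else 0) := by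
    intro v w
    by_cases hadj : G.Adj v w
    · by_cases hv : y v = 0
      · simp [hadj, hv]
      · by_cases hw : y w = 0
        · simp [hadj, hw]
        · rw [if_pos hadj, if_pos ⟨hadj, hv, hw⟩]
          nlinarith [sq_nonneg (y v - y w)]
    · simp [hadj]
  calc ∑ v, ∑ w, (if G.Adj v w then y v * y w else 0)
      ≤ ∑ v, ∑ w, (if G.Adj v w ∧ y v ≠ 0 ∧ y w ≠ 0 then (y v ^ 2 + y w ^ 2) / 2 else 0) :=
        Finset.sum_le_sum fun v _ => Finset.sum_le_sum fun w _ => step1 v w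
    _ = ∑ v, ∑ w, (if G.Adj v w ∧ y v ≠ 0 ∧ y w ≠ 0 then y v ^ 2 else 0) := by
        have hsplit : ∀ v w : Fin n,
            (if G.Adj v w ∧ y v ≠ 0 ∧ y w ≠ 0 then (y v ^ 2 + y w ^ 2) / 2 else 0)
            = ((if G.Adj v w ∧ y v ≠ 0 ∧ y w ≠ 0 then y v ^ 2 else 0)
              + (if G.Adj v w ∧ y v ≠ 0 ∧ y w ≠ 0 then y w ^ 2 else 0)) / 2 := by
          intro v w; by_cases h : G.Adj v w ∧ y v ≠ 0 ∧ y w ≠ 0 <;> simp [h]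
        simp only [hsplit]
        have hswap : ∑ v, ∑ w, (if G.Adj v w ∧ y v ≠ 0 ∧ y w ≠ 0 then y w ^ 2 else 0)
            = ∑ v, ∑ w, (if G.Adj v w ∧ y v ≠ 0 ∧ y w ≠ 0 then y v ^ 2 else 0) := by
          rw [Finset.sum_comm]
          refine Finset.sum_congr rfl fun v _ => Finset.sum_congr rfl fun w _ => ?_
          refine if_congr ?_ rfl rfl
          constructor
          · rintro ⟨h1, h2, h3⟩; exact ⟨h1.symm, h3, h2⟩
          · rintro ⟨h1, h2, h3⟩; exact ⟨h1.symm, h3, h2⟩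
        simp only [add_div, Finset.sum_add_distrib, ← Finset.sum_div]
        rw [hswap]
        ring
    _ ≤ ∑ v, y v ^ 2 * d := by
        refine Finset.sum_le_sum fun v _ => ?_
        by_cases hv : y v = 0
        · simp [hv]
        · have hrw : ∑ w, (if G.Adj v w ∧ y v ≠ 0 ∧ y w ≠ 0 then y v ^ 2 else 0)
              = (Finset.univ.filter (fun w => G.Adj v w ∧ y v ≠ 0 ∧ y w ≠ 0)).card • (y v ^ 2) := by
            rw [← Finset.sum_filter, Finset.sum_const]
          rw [hrw, nsmul_eq_mul]
          have hsub : (Finset.univ.filter (fun w => G.Adj v w ∧ y v ≠ 0 ∧ y w ≠ 0))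
              ⊆ (Finset.univ.filter (fun w => G.Adj v w ∧ c w = c v)) := by
            intro w hw
            simp only [Finset.mem_filter, Finset.mem_univ, true_and] at hw ⊢
            exact ⟨hw.1, by rw [hy w hw.2.2, hy v hv]⟩
          have hcard : (Finset.univ.filter (fun w => G.Adj v w ∧ y v ≠ 0 ∧ y w ≠ 0)).card ≤ d := by
            refine le_trans (Finset.card_le_card hsub) ?_
            have := hc v
            rwa [Set.ncard_eq_toFinset_card', Set.toFinset_setOf] at this
          calc ((Finset.univ.filter (fun w => G.Adj v w ∧ y v ≠ 0 ∧ y w ≠ 0)).card : ℝ) * y v ^ 2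
              ≤ (d : ℝ) * y v ^ 2 := by
                exact mul_le_mul_of_nonneg_right (by exact_mod_cast hcard) (sq_nonneg _)
            _ = y v ^ 2 * d := by ring
    _ = d * (y ⬝ᵥ y) := by
        rw [dotProduct, Finset.mul_sum]
        exact Finset.sum_congr rfl fun v _ => by ring

end SpecAux

open ImproperPaper in

theorem stmt_1 {n : ℕ} (hn : 1 ≤ n) (G : SimpleGraph (Fin n)) [DecidableRel G.Adj]
    (hedge : ∃ u v : Fin n, G.Adj u v) (d m : ℕ)
    (hA : (G.adjMatrix ℝ).IsHermitian) (lam : Fin n → ℝ) (hlam : IsEigList hA lam)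
    (hm : improperChromaticNumber G d = m)
    (heq : (m : ℝ) =
      (lam ⟨0, by omega⟩ - lam ⟨n - 1, by omega⟩) / ((d : ℝ) - lam ⟨n - 1, by omega⟩)) :
    m - 1 ≤ ({i : Fin n | lam i = lam ⟨n - 1, by omega⟩} : Set (Fin n)).ncard := by
  classical
  obtain ⟨hanti, σ, hσ⟩ := hlam
  by_cases hm1 : m ≤ 1
  · have h0 : m - 1 = 0 := by omega
    rw [h0]; exact Nat.zero_le _
  push_neg at hm1
  set z0 : Fin n := ⟨0, by omega⟩ with hz0
  set zl : Fin n := ⟨n - 1, by omega⟩ with hzl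
  set μ1 := lam z0 with hμ1
  set μn := lam zl with hμn
  have hmR : (1 : ℝ) < m := by exact_mod_cast hm1
  have hdn : (d : ℝ) - μn ≠ 0 := by
    intro h
    rw [h, div_zero] at heq
    have : m = 0 := by exact_mod_cast heq
    omega
  have hkey : μ1 - μn = (m : ℝ) * ((d : ℝ) - μn) := by
    field_simp at heq
    linarith [heq]
  have heig_lb : ∀ i, μn ≤ hA.eigenvalues i := by
    intro i
    have h1 : hA.eigenvalues i = lam (σ.symm i) := by
      rw [hσ]; simp
    rw [h1, hμn]
    refine hanti ?_
    rw [Fin.le_def]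
    have := (σ.symm i).isLt
    simp only [hzl]
    omega
  set x : Fin n → ℝ := SpecAux.evec hA (σ z0) with hx
  have hx1 : (G.adjMatrix ℝ) *ᵥ x = μ1 • x := by
    rw [hx, SpecAux.mulVec_evec]
    congr 1
    rw [hμ1, hσ]
    rfl
  have hxx : x ⬝ᵥ x = 1 := by
    have := SpecAux.evec_dot hA (σ z0) (σ z0)
    simpa using this
  -- obtain an optimal colouring
  have hmmem : ∃ c : Fin n → Fin m, IsImproperColoring G d c := by
    have hne : {k | ∃ c : Fin n → Fin k, IsImproperColoring G d c}.Nonempty := by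
      refine ⟨n, fun v => v, fun v => ?_⟩
      have hemp : ({w | G.Adj v w ∧ (fun v => v) w = (fun v => v) v} : Set (Fin n)) = ∅ := by
        ext w
        simp only [Set.mem_setOf_eq, Set.mem_empty_iff_false, iff_false, not_and]
        rintro h rfl
        exact G.irrefl h
      rw [hemp, Set.ncard_empty]
      exact Nat.zero_le _
    have := Nat.sInf_mem hne
    rw [show sInf {k | ∃ c : Fin n → Fin k, IsImproperColoring G d c} = m from hm] at this
    exact this
  obtain ⟨c, hc⟩ := hmmem
  have hc' : ∀ v, ({w | G.Adj v w ∧ c w = c v} : Set (Fin n)).ncard ≤ d := hc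
  set y : Fin m → Fin n → ℝ := fun k v => if c v = k then x v else 0 with hy
  have hyval : ∀ k v, y k v ≠ 0 → c v = k := by
    intro k v hv
    by_contra h
    simp [hy, h] at hv
  have hysum : ∑ k, y k = x := by
    funext v
    rw [Finset.sum_apply]
    simp [hy]
  have hyx : ∀ k, y k ⬝ᵥ x = y k ⬝ᵥ y k := by
    intro k
    rw [dotProduct, dotProduct]
    refine Finset.sum_congr rfl fun v _ => ?_
    by_cases h : c v = k <;> simp [hy, h]
  set ν : Fin m → ℝ := fun k => y k ⬝ᵥ y k with hν
  have hν1 : ∑ k, ν k = 1 := by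
    have h1 : (∑ k, y k) ⬝ᵥ x = 1 := by rw [hysum, hxx]
    rw [SpecAux.sum_dot] at h1
    rw [← h1]
    exact Finset.sum_congr rfl fun k _ => (hyx k).symm
  set T : Fin m → ℝ := fun k => y k ⬝ᵥ ((G.adjMatrix ℝ) *ᵥ y k) with hT
  have hTd : ∀ k, T k ≤ d * ν k := fun k =>
    SpecAux.class_bound hc' (y k) k (hyval k)
  set u : Fin m → Fin n → ℝ := fun k => x - (m : ℝ) • y k with hu
  have hueig0 : ∀ k, u k ⬝ᵥ ((G.adjMatrix ℝ) *ᵥ u k) - μn * (u k ⬝ᵥ u k)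
      = (μ1 - μn) + (-2*m*μ1 + 2*m*μn - m^2*μn) * ν k + m^2 * T k := by
    intro k
    have e1 : (G.adjMatrix ℝ) *ᵥ u k
        = (G.adjMatrix ℝ) *ᵥ x - (m:ℝ) • ((G.adjMatrix ℝ) *ᵥ y k) := by
      rw [hu]
      simp [Matrix.mulVec_sub, Matrix.mulVec_smul]
    have hxAy : x ⬝ᵥ ((G.adjMatrix ℝ) *ᵥ y k) = μ1 * ν k := by
      rw [SpecAux.dot_symm hA, hx1, smul_dotProduct, smul_eq_mul, dotProduct_comm,
        hyx k]
    have hyAx : y k ⬝ᵥ ((G.adjMatrix ℝ) *ᵥ x) = μ1 * ν k := by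
      rw [hx1, dotProduct_smul, smul_eq_mul, hyx k]
    have hxAx : x ⬝ᵥ ((G.adjMatrix ℝ) *ᵥ x) = μ1 := by
      rw [hx1, dotProduct_smul, smul_eq_mul, hxx, mul_one]
    have hxy : x ⬝ᵥ y k = ν k := by rw [dotProduct_comm]; exact hyx k
    have hyx' : y k ⬝ᵥ x = ν k := hyx k
    have huu : u k ⬝ᵥ u k = 1 - 2*m*ν k + m^2*ν k := by
      rw [hu]
      simp only [sub_dotProduct, dotProduct_sub, smul_dotProduct,
        dotProduct_smul, smul_eq_mul, hxx, hxy, hyx']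
      ring
    have huAu : u k ⬝ᵥ ((G.adjMatrix ℝ) *ᵥ u k) = μ1 - 2*m*μ1*ν k + m^2 * T k := by
      rw [e1, hu]
      simp only [sub_dotProduct, dotProduct_sub, smul_dotProduct,
        dotProduct_smul, smul_eq_mul, hxAx, hxAy, hyAx]
      rw [hT]
      ring
    rw [huu, huAu]
    ring
  have hQ0 : ∀ k, 0 ≤ u k ⬝ᵥ ((G.adjMatrix ℝ) *ᵥ u k) - μn * (u k ⬝ᵥ u k) := by
    intro k
    have := SpecAux.rayleigh_lower hA heig_lb (u k)
    linarith
  have hsumQ : ∑ k, (u k ⬝ᵥ ((G.adjMatrix ℝ) *ᵥ u k) - μn * (u k ⬝ᵥ u k))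
      = (m:ℝ)^2 * ((∑ k, T k) - d) := by
    calc ∑ k, (u k ⬝ᵥ ((G.adjMatrix ℝ) *ᵥ u k) - μn * (u k ⬝ᵥ u k))
        = ∑ k, ((μ1 - μn) + (-2*m*μ1 + 2*m*μn - m^2*μn) * ν k + m^2 * T k) :=
          Finset.sum_congr rfl fun k _ => hueig0 k
      _ = (m:ℝ) * (μ1 - μn) + (-2*m*μ1 + 2*m*μn - m^2*μn) * (∑ k, ν k)
          + m^2 * (∑ k, T k) := by
          rw [Finset.sum_add_distrib, Finset.sum_add_distrib, ← Finset.mul_sum,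
            ← Finset.mul_sum, Finset.sum_const, Finset.card_univ, Fintype.card_fin,
            nsmul_eq_mul]
      _ = (m:ℝ)^2 * ((∑ k, T k) - d) := by
          rw [hν1]
          linear_combination (-(m:ℝ)) * hkey
  have hsum_le : ∑ k, (u k ⬝ᵥ ((G.adjMatrix ℝ) *ᵥ u k) - μn * (u k ⬝ᵥ u k)) ≤ 0 := by
    rw [hsumQ]
    apply mul_nonpos_of_nonneg_of_nonpos (sq_nonneg _)
    have h1 : ∑ k, T k ≤ ∑ k, (d:ℝ) * ν k := Finset.sum_le_sum fun k _ => hTd k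
    rw [← Finset.mul_sum, hν1, mul_one] at h1
    linarith
  have hsum0 : ∀ k ∈ Finset.univ,
      u k ⬝ᵥ ((G.adjMatrix ℝ) *ᵥ u k) - μn * (u k ⬝ᵥ u k) = 0 := by
    rw [← Finset.sum_eq_zero_iff_of_nonneg (fun k _ => hQ0 k)]
    exact le_antisymm hsum_le (Finset.sum_nonneg fun k _ => hQ0 k)
  have hueig : ∀ k, (G.adjMatrix ℝ) *ᵥ u k = μn • u k := by
    intro k
    refine SpecAux.eigen_of_rayleigh_eq hA heig_lb (u k) ?_
    have := hsum0 k (Finset.mem_univ k)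
    linarith
  have hμ1n : μ1 ≠ μn := by
    intro h
    rw [h, sub_self] at hkey
    rcases mul_eq_zero.mp hkey.symm with h1 | h1
    · have : m = 0 := by exact_mod_cast h1
      omega
    · exact hdn h1
  have hyne : ∀ k, y k ≠ 0 := by
    intro k hk
    have hukx : u k = x := by rw [hu]; simp [hk]
    have h1 := hueig k
    rw [hukx, hx1] at h1
    have h2 : (μ1 - μn) • x = 0 := by rw [sub_smul, h1, sub_self]
    rcases smul_eq_zero.mp h2 with h3 | h3
    · exact hμ1n (by linarith [sub_eq_zero.mp h3])
    · rw [h3] at hxx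
      simp at hxx
  have hcoeff : ∀ g : Fin m → ℝ, ∑ k, g k • u k = 0 → ∀ k, (m:ℝ) * g k = ∑ k', g k' := by
    intro g hg k
    obtain ⟨v, hv⟩ : ∃ v, y k v ≠ 0 := by
      by_contra h
      push_neg at h
      exact hyne k (funext fun v => h v)
    have hcv : c v = k := hyval k v hv
    have hxv : x v ≠ 0 := by
      have hxy : y k v = x v := by simp [hy, hcv]
      rwa [hxy] at hv
    have hyv : ∀ k', y k' v = if k' = k then x v else 0 := by
      intro k'
      by_cases h : k' = k
      · simp [hy, h, hcv]
      · have hne : ¬ (c v = k') := by rw [hcv]; exact fun hh => h hh.symm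
        simp [hy, hne, h]
    have h0 := congrFun hg v
    simp only [hu, Finset.sum_apply, Pi.smul_apply, Pi.sub_apply, Pi.zero_apply,
      smul_eq_mul] at h0
    have hterm : ∀ k' ∈ Finset.univ, g k' * (x v - (m:ℝ) * y k' v)
        = g k' * x v - (if k' = k then (m:ℝ) * g k' * x v else 0) := by
      intro k' _
      rw [hyv k']
      by_cases h : k' = k <;> simp [h] <;> ring
    rw [Finset.sum_congr rfl hterm, Finset.sum_sub_distrib,
      Finset.sum_ite_eq' Finset.univ k (fun k' => (m:ℝ) * g k' * x v), ← Finset.sum_mul] at h0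
    simp only [Finset.mem_univ, if_true] at h0
    have h1 : ((∑ k', g k') - (m:ℝ) * g k) * x v = 0 := by linear_combination h0
    rcases mul_eq_zero.mp h1 with h2 | h2
    · linarith
    · exact absurd h2 hxv
  set z : Fin m := ⟨0, by omega⟩ with hz
  have hli : LinearIndependent ℝ (fun k : {k : Fin m // k ≠ z} => u k.val) := by
    rw [Fintype.linearIndependent_iff]
    intro g hg
    set g' : Fin m → ℝ := fun k => if h : k = z then 0 else g ⟨k, h⟩ with hg'
    have hsub : ∑ k ∈ ({z}ᶜ : Finset (Fin m)), g' k • u k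
        = ∑ k : {k : Fin m // k ≠ z}, g' k.val • u k.val := by
      exact Finset.sum_subtype _ (fun k => by simp) (fun k => g' k • u k)
    have hsum' : ∑ k, g' k • u k = 0 := by
      rw [← Finset.sum_subset (Finset.subset_univ ({z}ᶜ : Finset (Fin m)))
        (fun k _ hk => by
          have hkz : k = z := by simpa using hk
          simp [hg', hkz])]
      rw [hsub]
      rw [← hg]
      refine Finset.sum_congr rfl fun k _ => ?_
      congr 1
      simp [hg', k.prop]
    have hall := hcoeff g' hsum'
    have hz0' : ∑ k', g' k' = 0 := by
      have := hall z
      simp [hg'] at this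
      linarith [this]
    intro i
    have hmi := hall i.val
    rw [hz0'] at hmi
    have hgi : g' i.val = 0 := by
      have hm0 : (m:ℝ) ≠ 0 := by positivity
      rcases mul_eq_zero.mp hmi with h | h
      · exact absurd h hm0
      · exact h
    rw [hg'] at hgi
    simp only [dif_neg i.prop] at hgi
    exact hgi
  have hcount := SpecAux.card_eig hA (fun k : {k : Fin m // k ≠ z} => u k.val) hli
    (fun j => hueig j.val)
  have hcard : Fintype.card {k : Fin m // k ≠ z} = m - 1 := by
    have h := Fintype.card_subtype_compl (p := fun k : Fin m => k = z)
    rw [Fintype.card_fin, Fintype.card_subtype_eq] at h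
    exact h
  have hfin : ({i : Fin n | lam i = μn} : Set (Fin n)).ncard
      = (Finset.univ.filter (fun i => hA.eigenvalues i = μn)).card := by
    have himg : ({i : Fin n | lam i = μn} : Set (Fin n))
        = ⇑σ.symm '' {i : Fin n | hA.eigenvalues i = μn} := by
      rw [Equiv.image_eq_preimage_symm]
      ext i
      simp [hσ]
    rw [himg, Set.ncard_image_of_injective _ σ.symm.injective,
      Set.ncard_eq_toFinset_card', Set.toFinset_setOf]
  calc m - 1 = Fintype.card {k : Fin m // k ≠ z} := hcard.symm
    _ ≤ (Finset.univ.filter (fun i => hA.eigenvalues i = μn)).card := hcount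
    _ = ({i : Fin n | lam i = μn} : Set (Fin n)).ncard := hfin.symm
end

section
/- For every finite simple graph G and every positive integer t, the fractional chromatic number of G equals the fractional t-clustered chromatic number of the strong product of G with K_t: χ_f(G) = χ_f^{\underline{t}}(G ⊠ K_t). -/
open SimpleGraph Finset Matrix

namespace StmtAux

open ImproperPaper

attribute [local instance] Classical.propDecidable

lemma exists_inj_colouring (U : Type*) [Fintype U] (b : ℕ) :
    ∃ c : U → Finset (Fin (Fintype.card U * b)), (∀ v, (c v).card = b) ∧
      ∀ (x : Fin (Fintype.card U * b)) v w, x ∈ c v → x ∈ c w → v = w := by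
  classical
  set e := Fintype.equivFin U
  refine ⟨fun v => ({e v} ×ˢ Finset.univ).map finProdFinEquiv.toEmbedding, ?_, ?_⟩
  · intro v
    simp [Finset.card_map, Finset.card_product]
  · intro x v w hv hw
    rw [Finset.mem_map_equiv] at hv hw
    simp only [Finset.mem_product, Finset.mem_singleton] at hv hw
    exact e.injective (hv.1.symm.trans hw.1)

lemma rtg_mem {α : Type*} {P : α → Prop} {r : α → α → Prop} (hr : ∀ a b, r a b → P b)
    {a b : α} (hab : Relation.ReflTransGen r a b) (ha : P a) : P b := by
  induction hab with
  | refl => exact ha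
  | tail _ h _ => exact hr _ _ h

section Core

variable {V : Type*} [Fintype V] {t n : ℕ} (G : SimpleGraph V) (c : V × Fin t → Finset (Fin n))

/-- the monochromatic adjacency relation for colour `x` on the strong product -/
def RR (x : Fin n) (a b : V × Fin t) : Prop :=
  (strongProd G (⊤ : SimpleGraph (Fin t))).Adj a b ∧ x ∈ c a ∧ x ∈ c b

/-- `v` and `w` lie in a common monochromatic component of colour `x` (projected to `V`) -/
def reach (x : Fin n) (v w : V) : Prop :=
  ∃ i j, x ∈ c (v, i) ∧ x ∈ c (w, j) ∧ Relation.ReflTransGen (RR G c x) (v, i) (w, j)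

set_option linter.unusedSectionVars false

/-- the multiplicity of colour `x` at vertex `v` -/
noncomputable def mcount (x : Fin n) (v : V) : ℕ :=
  (Finset.univ.filter fun i : Fin t => x ∈ c (v, i)).card

/-- the offset of the colour-interval of `v` for colour `x` -/
noncomputable def sig (ι : V → ℕ) (x : Fin n) (v : V) : ℕ :=
  ∑ u ∈ Finset.univ.filter (fun u => reach G c x v u ∧ ι u < ι v), mcount c x u

variable {G c}

lemma rr_symm {x : Fin n} : Symmetric (RR G c x) :=
  fun _ _ h => ⟨h.1.symm, h.2.2, h.2.1⟩

lemma rtg_colour {x : Fin n} {p q : V × Fin t} (hp : x ∈ c p)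
    (h : Relation.ReflTransGen (RR G c x) p q) : x ∈ c q :=
  rtg_mem (P := fun q => x ∈ c q) (fun _ _ h => h.2.2) h hp

lemma rtg_same {x : Fin n} {v : V} {i j : Fin t} (hi : x ∈ c (v, i)) (hj : x ∈ c (v, j)) :
    Relation.ReflTransGen (RR G c x) (v, i) (v, j) := by
  rcases eq_or_ne i j with rfl | hij
  · exact Relation.ReflTransGen.refl
  · exact Relation.ReflTransGen.single ⟨Or.inl ⟨rfl, hij⟩, hi, hj⟩

lemma rtg_adj {x : Fin n} {v w : V} {i j : Fin t} (h : G.Adj v w)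
    (hi : x ∈ c (v, i)) (hj : x ∈ c (w, j)) :
    Relation.ReflTransGen (RR G c x) (v, i) (w, j) := by
  rcases eq_or_ne i j with rfl | hij
  · exact Relation.ReflTransGen.single ⟨Or.inr (Or.inl ⟨h, rfl⟩), hi, hj⟩
  · exact Relation.ReflTransGen.single ⟨Or.inr (Or.inr ⟨h, hij⟩), hi, hj⟩

lemma reach_symm {x : Fin n} {v w : V} (h : reach G c x v w) : reach G c x w v := by
  obtain ⟨i, j, hi, hj, hp⟩ := h
  haveI : Std.Symm (RR G c x) := ⟨fun a b h => rr_symm h⟩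
  exact ⟨j, i, hj, hi, (Relation.ReflTransGen.symmetric (r := RR G c x)).symm _ _ hp⟩

lemma reach_trans {x : Fin n} {u v w : V} (h1 : reach G c x u v) (h2 : reach G c x v w) :
    reach G c x u w := by
  obtain ⟨i, j, hi, hj, hp⟩ := h1
  obtain ⟨j', k, hj', hk, hp'⟩ := h2
  exact ⟨i, k, hi, hk, hp.trans ((rtg_same hj hj').trans hp')⟩

lemma reach_self {x : Fin n} {v : V} {i : Fin t} (h : x ∈ c (v, i)) : reach G c x v v :=
  ⟨i, i, h, h, Relation.ReflTransGen.refl⟩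

lemma mcount_pos {x : Fin n} {v : V} : 0 < mcount c x v ↔ ∃ i, x ∈ c (v, i) := by
  simp [mcount, Finset.card_pos, Finset.filter_nonempty_iff]

lemma sum_comp_le {x : Fin n} {v : V} {i : Fin t}
    (hclus : ∀ p, x ∈ c p →
      ({w | Relation.ReflTransGen (RR G c x) p w} : Set (V × Fin t)).ncard ≤ t)
    (hvi : x ∈ c (v, i)) :
    ∑ u ∈ Finset.univ.filter (fun u => reach G c x v u), mcount c x u ≤ t := by
  classical
  set D := Finset.univ.filter (fun p : V × Fin t => Relation.ReflTransGen (RR G c x) (v, i) p)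
    with hDdef
  have hD : D.card ≤ t := by
    have h := hclus (v, i) hvi
    have hset : ({w | Relation.ReflTransGen (RR G c x) (v, i) w} : Set (V × Fin t)) = ↑D := by
      ext p; simp [hDdef]
    rwa [hset, Set.ncard_coe_finset] at h
  refine le_trans (le_of_eq ?_) hD
  rw [Finset.card_eq_sum_card_fiberwise (f := Prod.fst) (t := Finset.univ)
    (fun _ _ => Finset.mem_univ _), Finset.sum_filter]
  refine Finset.sum_congr rfl fun u _ => ?_
  by_cases hr : reach G c x v u
  · rw [if_pos hr]
    have himg : D.filter (fun p => p.1 = u) =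
        (Finset.univ.filter fun j : Fin t => x ∈ c (u, j)).image (fun j => (u, j)) := by
      ext p
      simp only [Finset.mem_filter, Finset.mem_image, Finset.mem_univ, true_and, hDdef]
      constructor
      · rintro ⟨hp, h1⟩
        exact ⟨p.2, by rw [← h1]; exact rtg_colour hvi hp, by rw [← h1]⟩
      · rintro ⟨j, hj, rfl⟩
        obtain ⟨i', j', h1, h2, hpath⟩ := hr
        exact ⟨(rtg_same hvi h1).trans (hpath.trans (rtg_same h2 hj)), rfl⟩
    rw [himg, Finset.card_image_of_injective _ (fun a b h => congrArg Prod.snd h)]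
    rfl
  · rw [if_neg hr]
    symm
    rw [Finset.card_eq_zero, Finset.filter_eq_empty_iff]
    rintro ⟨p1, p2⟩ hp hu
    simp only [hDdef, Finset.mem_filter, Finset.mem_univ, true_and] at hp
    simp only at hu
    subst hu
    exact hr ⟨i, p2, hvi, rtg_colour hvi hp, hp⟩

lemma sig_add_le {x : Fin n} {v : V} {i : Fin t} (ι : V → ℕ)
    (hclus : ∀ p, x ∈ c p →
      ({w | Relation.ReflTransGen (RR G c x) p w} : Set (V × Fin t)).ncard ≤ t)
    (hvi : x ∈ c (v, i)) :
    sig G c ι x v + mcount c x v ≤ t := by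
  classical
  have hnot : v ∉ Finset.univ.filter (fun u => reach G c x v u ∧ ι u < ι v) := by
    simp
  have hsub : insert v (Finset.univ.filter (fun u => reach G c x v u ∧ ι u < ι v)) ⊆
      Finset.univ.filter (fun u => reach G c x v u) := by
    intro u hu
    rcases Finset.mem_insert.1 hu with rfl | hu
    · simp [reach_self hvi]
    · simp only [Finset.mem_filter, Finset.mem_univ, true_and] at hu ⊢
      exact hu.1
  calc sig G c ι x v + mcount c x v
      = ∑ u ∈ insert v (Finset.univ.filter (fun u => reach G c x v u ∧ ι u < ι v)),
          mcount c x u := by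
        rw [Finset.sum_insert hnot, add_comm]; rfl
    _ ≤ ∑ u ∈ Finset.univ.filter (fun u => reach G c x v u), mcount c x u :=
        Finset.sum_le_sum_of_subset hsub
    _ ≤ t := sum_comp_le hclus hvi

lemma interval_disj_aux {x : Fin n} {v w : V} {i j : Fin t} {ι : V → ℕ}
    (hadj : G.Adj v w) (hv : x ∈ c (v, i)) (hw : x ∈ c (w, j)) (hlt : ι v < ι w)
    {s : ℕ} (h2 : s < sig G c ι x v + mcount c x v) (h3 : sig G c ι x w ≤ s) : False := by
  classical
  have hreach : reach G c x v w := ⟨i, j, hv, hw, rtg_adj hadj hv hw⟩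
  have hnot : v ∉ Finset.univ.filter (fun u => reach G c x v u ∧ ι u < ι v) := by simp
  have hsub : insert v (Finset.univ.filter (fun u => reach G c x v u ∧ ι u < ι v)) ⊆
      Finset.univ.filter (fun u => reach G c x w u ∧ ι u < ι w) := by
    intro u hu
    rcases Finset.mem_insert.1 hu with rfl | hu
    · simp only [Finset.mem_filter, Finset.mem_univ, true_and]
      exact ⟨reach_symm hreach, hlt⟩
    · simp only [Finset.mem_filter, Finset.mem_univ, true_and] at hu ⊢
      exact ⟨reach_trans (reach_symm hreach) hu.1, hu.2.trans hlt⟩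
  have hle : sig G c ι x v + mcount c x v ≤ sig G c ι x w := by
    calc sig G c ι x v + mcount c x v
        = ∑ u ∈ insert v (Finset.univ.filter (fun u => reach G c x v u ∧ ι u < ι v)),
            mcount c x u := by rw [Finset.sum_insert hnot, add_comm]; rfl
      _ ≤ sig G c ι x w := Finset.sum_le_sum_of_subset hsub
  omega

lemma interval_disj {x : Fin n} {v w : V} {i j : Fin t} {ι : V → ℕ}
    (hι : Function.Injective ι)
    (hadj : G.Adj v w) (hv : x ∈ c (v, i)) (hw : x ∈ c (w, j)) {s : ℕ}
    (h1 : sig G c ι x v ≤ s) (h2 : s < sig G c ι x v + mcount c x v)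
    (h3 : sig G c ι x w ≤ s) (h4 : s < sig G c ι x w + mcount c x w) : False := by
  have hne : ι v ≠ ι w := fun h => hadj.ne (hι h)
  rcases hne.lt_or_gt with hlt | hlt
  · exact interval_disj_aux hadj hv hw hlt h2 h3
  · exact interval_disj_aux hadj.symm hw hv hlt h4 h1

lemma card_interval_fin {t a m : ℕ} (h : a + m ≤ t) :
    (Finset.univ.filter fun s : Fin t => a ≤ (s : ℕ) ∧ (s : ℕ) < a + m).card = m := by
  classical
  have : (Finset.univ.filter fun s : Fin t => a ≤ (s : ℕ) ∧ (s : ℕ) < a + m).card =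
      (Finset.Ico a (a + m)).card := by
    refine Finset.card_bij (fun s _ => (s : ℕ)) ?_ ?_ ?_
    · intro s hs
      simp only [Finset.mem_filter] at hs
      simp [Finset.mem_Ico, hs.2.1, hs.2.2]
    · intro s1 _ s2 _ hss
      exact Fin.val_injective hss
    · intro y hy
      simp only [Finset.mem_Ico] at hy
      exact ⟨⟨y, lt_of_lt_of_le hy.2 h⟩, by simp [hy.1, hy.2], rfl⟩
  rw [this, Nat.card_Ico, Nat.add_sub_cancel_left]

variable (G c) in
/-- the new proper colouring of `G` obtained from a clustered colouring of the product -/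
noncomputable def col (ι : V → ℕ) (v : V) : Finset (Fin n × Fin t) :=
  Finset.univ.filter fun q =>
    sig G c ι q.1 v ≤ (q.2 : ℕ) ∧ (q.2 : ℕ) < sig G c ι q.1 v + mcount c q.1 v

lemma mem_col {ι : V → ℕ} {v : V} {q : Fin n × Fin t} :
    q ∈ col G c ι v ↔
      sig G c ι q.1 v ≤ (q.2 : ℕ) ∧ (q.2 : ℕ) < sig G c ι q.1 v + mcount c q.1 v := by
  simp [col]

lemma col_support {ι : V → ℕ} {v : V} {q : Fin n × Fin t} (h : q ∈ col G c ι v) :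
    ∃ i, q.1 ∈ c (v, i) := by
  rw [mem_col] at h
  exact mcount_pos.1 (by omega)

lemma card_col {b : ℕ} (ι : V → ℕ) (hb : ∀ p, (c p).card = b)
    (hclus : ∀ (x : Fin n) p, x ∈ c p →
      ({w | Relation.ReflTransGen (RR G c x) p w} : Set (V × Fin t)).ncard ≤ t)
    (v : V) : (col G c ι v).card = t * b := by
  classical
  have hfib : ∀ x : Fin n,
      ((col G c ι v).filter fun q => q.1 = x).card = mcount c x v := by
    intro x
    have himg : (col G c ι v).filter (fun q => q.1 = x) =
        (Finset.univ.filter fun s : Fin t =>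
          sig G c ι x v ≤ (s : ℕ) ∧ (s : ℕ) < sig G c ι x v + mcount c x v).image
          (fun s => (x, s)) := by
      ext ⟨y, s⟩
      simp only [Finset.mem_filter, Finset.mem_image, Finset.mem_univ, true_and, mem_col]
      constructor
      · rintro ⟨hq, rfl⟩
        exact ⟨s, hq, rfl⟩
      · rintro ⟨s', hs', heq⟩
        obtain ⟨h1, h2⟩ := Prod.mk.injEq .. ▸ heq
        refine ⟨?_, h1.symm⟩
        · subst h1; cases h2; exact hs'
    rw [himg, Finset.card_image_of_injective _ (fun a b h => congrArg Prod.snd h)]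
    rcases Nat.eq_zero_or_pos (mcount c x v) with hm | hm
    · rw [hm]
      rw [Finset.card_eq_zero, Finset.filter_eq_empty_iff]
      intro s _
      omega
    · obtain ⟨i, hi⟩ := mcount_pos.1 hm
      exact card_interval_fin (sig_add_le ι (hclus x) hi)
  have hcard : (col G c ι v).card = ∑ x : Fin n, mcount c x v := by
    rw [Finset.card_eq_sum_card_fiberwise (f := Prod.fst) (t := Finset.univ)
      (fun _ _ => Finset.mem_univ _)]
    exact Finset.sum_congr rfl fun x _ => hfib x
  rw [hcard]
  -- double counting
  have : ∑ x : Fin n, mcount c x v = ∑ i : Fin t, (c (v, i)).card := by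
    simp only [mcount, Finset.card_filter]
    rw [Finset.sum_comm]
    refine Finset.sum_congr rfl fun i _ => ?_
    simp [Finset.sum_ite_mem, Finset.univ_inter]
  rw [this]
  simp [hb, Finset.sum_const, Finset.card_univ, mul_comm]

lemma col_proper {ι : V → ℕ} (hι : Function.Injective ι) {v w : V} (hadj : G.Adj v w)
    {q : Fin n × Fin t} (hqv : q ∈ col G c ι v) (hqw : q ∈ col G c ι w) : False := by
  obtain ⟨i, hi⟩ := col_support hqv
  obtain ⟨j, hj⟩ := col_support hqw
  rw [mem_col] at hqv hqw
  exact interval_disj hι hadj hi hj hqv.1 hqv.2 hqw.1 hqw.2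

end Core

lemma rtg_invariant {α : Type*} {P : α → Prop} {r : α → α → Prop}
    (hr : ∀ a b, r a b → P a → P b) {a b : α} (hab : Relation.ReflTransGen r a b)
    (ha : P a) : P b := by
  induction hab with
  | refl => exact ha
  | tail _ h ih => exact hr _ _ h ih

lemma chrom_set_nonempty {V : Type*} [Fintype V] (G : SimpleGraph V) (b : ℕ) :
    {n | ∃ c : V → Finset (Fin n), (∀ v, (c v).card = b) ∧
      ∀ v : V, ∀ x ∈ c v, ({w | G.Adj v w ∧ x ∈ c w} : Set V).ncard ≤ 0}.Nonempty := by
  obtain ⟨c, hcard, hinj⟩ := exists_inj_colouring V b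
  refine ⟨Fintype.card V * b, c, hcard, fun v x hx => ?_⟩
  have : ({w | G.Adj v w ∧ x ∈ c w} : Set V) = ∅ := by
    ext w
    simp only [Set.mem_setOf_eq, Set.mem_empty_iff_false, iff_false, not_and]
    intro hadj hw
    exact hadj.ne (hinj x v w hx hw)
  simp [this]

lemma clustered_set_nonempty {U : Type*} [Fintype U] (H : SimpleGraph U) (b t : ℕ)
    (ht : 0 < t) :
    {n | ∃ c : U → Finset (Fin n), (∀ v, (c v).card = b) ∧
      ∀ x : Fin n, ∀ v : U, x ∈ c v →
        ({w | Relation.ReflTransGen (fun a b' => H.Adj a b' ∧ x ∈ c a ∧ x ∈ c b') v w} :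
          Set U).ncard ≤ t}.Nonempty := by
  obtain ⟨c, hcard, hinj⟩ := exists_inj_colouring U b
  refine ⟨Fintype.card U * b, c, hcard, fun x v hx => ?_⟩
  have hset : ({w | Relation.ReflTransGen
      (fun a b' => H.Adj a b' ∧ x ∈ c a ∧ x ∈ c b') v w} : Set U) = {v} := by
    ext w
    simp only [Set.mem_setOf_eq, Set.mem_singleton_iff]
    constructor
    · intro hw
      exact (rtg_invariant (P := fun u => u = v)
        (fun a b' h _ => absurd (hinj x a b' h.2.1 h.2.2) h.1.ne) hw rfl)
    · rintro rfl; exact Relation.ReflTransGen.refl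
  rw [hset, Set.ncard_singleton]
  exact ht

lemma le_one {V : Type*} [Fintype V] (G : SimpleGraph V) (t b : ℕ) (ht : 0 < t) :
    bFoldClusteredChromaticNumber (strongProd G (⊤ : SimpleGraph (Fin t))) b t ≤
      bFoldChromaticNumber G b := by
  classical
  obtain ⟨c, hcard, hproper⟩ := Nat.sInf_mem (chrom_set_nonempty G b)
  have hempty : ∀ u x, x ∈ c u → ({w | G.Adj u w ∧ x ∈ c w} : Set V) = ∅ := fun u x hu =>
    (Set.ncard_eq_zero (Set.toFinite _)).1 (Nat.le_zero.1 (hproper u x hu))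
  apply Nat.sInf_le
  refine ⟨fun p => c p.1, fun p => hcard p.1, ?_⟩
  intro x p hx
  set r := fun a b' : V × Fin t =>
    (strongProd G (⊤ : SimpleGraph (Fin t))).Adj a b' ∧ x ∈ c a.1 ∧ x ∈ c b'.1 with hr
  have hfst : ∀ w, Relation.ReflTransGen r p w → w.1 = p.1 := by
    intro w hw
    refine rtg_invariant (P := fun w => w.1 = p.1) ?_ hw rfl
    rintro a b' ⟨hadj, ha, hb'⟩ hap
    rcases hadj with ⟨h1, _⟩ | ⟨h1, _⟩ | ⟨h1, _⟩
    · rw [← h1, hap]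
    · exact (Set.eq_empty_iff_forall_notMem.1 (hempty a.1 x ha) b'.1 ⟨h1, hb'⟩).elim
    · exact (Set.eq_empty_iff_forall_notMem.1 (hempty a.1 x ha) b'.1 ⟨h1, hb'⟩).elim
  set S := {w | Relation.ReflTransGen r p w} with hS
  have hinj : Set.InjOn Prod.snd S := by
    intro a ha b' hb' hab
    exact Prod.ext ((hfst a ha).trans (hfst b' hb').symm) hab
  calc S.ncard = (Prod.snd '' S).ncard := (Set.ncard_image_of_injOn hinj).symm
    _ ≤ (Set.univ : Set (Fin t)).ncard :=
        Set.ncard_le_ncard (Set.subset_univ _) Set.finite_univ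
    _ = t := by rw [Set.ncard_univ, Nat.card_eq_fintype_card, Fintype.card_fin]

lemma le_two {V : Type*} [Fintype V] (G : SimpleGraph V) (t b : ℕ) (ht : 0 < t) :
    bFoldChromaticNumber G (t * b) ≤
      (bFoldClusteredChromaticNumber (strongProd G (⊤ : SimpleGraph (Fin t))) b t) * t := by
  classical
  obtain ⟨c, hcard, hclus⟩ : bFoldClusteredChromaticNumber
      (strongProd G (⊤ : SimpleGraph (Fin t))) b t ∈ {n | ∃ c : V × Fin t → Finset (Fin n),
      (∀ v, (c v).card = b) ∧ ∀ x : Fin n, ∀ v, x ∈ c v →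
        ({w | Relation.ReflTransGen (fun a b' => (strongProd G (⊤ : SimpleGraph (Fin t))).Adj a b'
          ∧ x ∈ c a ∧ x ∈ c b') v w} : Set (V × Fin t)).ncard ≤ t} :=
    Nat.sInf_mem (clustered_set_nonempty (strongProd G (⊤ : SimpleGraph (Fin t))) b t ht)
  have hclus' : ∀ (x : Fin (bFoldClusteredChromaticNumber
      (strongProd G (⊤ : SimpleGraph (Fin t))) b t)) p, x ∈ c p →
      ({w | Relation.ReflTransGen (RR G c x) p w} : Set (V × Fin t)).ncard ≤ t :=
    fun x p hp => hclus x p hp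
  set e := Fintype.equivFin V
  have hι : Function.Injective (fun v => (e v : ℕ)) :=
    fun a b' h => e.injective (Fin.val_injective h)
  apply Nat.sInf_le
  refine ⟨fun v => (col G c (fun v => (e v : ℕ)) v).map finProdFinEquiv.toEmbedding,
    fun v => ?_, ?_⟩
  · rw [Finset.card_map, card_col _ hcard hclus']
  · intro v x hx
    have : ({w | G.Adj v w ∧
        x ∈ (col G c (fun v => (e v : ℕ)) w).map finProdFinEquiv.toEmbedding} : Set V) = ∅ := by
      ext w
      simp only [Set.mem_setOf_eq, Set.mem_empty_iff_false, iff_false, not_and]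
      intro hadj hw
      rw [Finset.mem_map_equiv] at hx hw
      exact col_proper hι hadj hx hw
    have h0 : ({w | G.Adj v w ∧
        x ∈ (col G c (fun v => (e v : ℕ)) w).map finProdFinEquiv.toEmbedding} : Set V).ncard
        = 0 := by rw [this]; exact Set.ncard_empty _
    exact le_of_eq h0

end StmtAux

open ImproperPaper in

theorem stmt_6 {V : Type*} [Fintype V] (G : SimpleGraph V) (t : ℕ) (ht : 0 < t) :
    fracChromaticNumber G =
      fracClusteredChromaticNumber (strongProd G (⊤ : SimpleGraph (Fin t))) t := by
  classical
  unfold fracChromaticNumber fracClusteredChromaticNumber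
  have hA_ne : {x : ℝ | ∃ b : ℕ, 0 < b ∧
      x = (bFoldChromaticNumber G b : ℝ) / b}.Nonempty := ⟨_, 1, one_pos, rfl⟩
  have hB_ne : {x : ℝ | ∃ b : ℕ, 0 < b ∧
      x = (bFoldClusteredChromaticNumber (strongProd G (⊤ : SimpleGraph (Fin t))) b t : ℝ) /
        b}.Nonempty := ⟨_, 1, one_pos, rfl⟩
  have hA_bdd : BddBelow {x : ℝ | ∃ b : ℕ, 0 < b ∧
      x = (bFoldChromaticNumber G b : ℝ) / b} := by
    refine ⟨0, ?_⟩
    rintro y ⟨b, hb, rfl⟩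
    positivity
  have hB_bdd : BddBelow {x : ℝ | ∃ b : ℕ, 0 < b ∧
      x = (bFoldClusteredChromaticNumber (strongProd G (⊤ : SimpleGraph (Fin t))) b t : ℝ) /
        b} := by
    refine ⟨0, ?_⟩
    rintro y ⟨b, hb, rfl⟩
    positivity
  apply le_antisymm
  · refine le_csInf hB_ne ?_
    rintro y ⟨b, hb, rfl⟩
    have h2 := StmtAux.le_two G t b ht
    have hb' : (0 : ℝ) < b := by exact_mod_cast hb
    have ht' : (0 : ℝ) < t := by exact_mod_cast ht
    refine le_trans (csInf_le hA_bdd ⟨t * b, Nat.mul_pos ht hb, rfl⟩) ?_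
    have hcast : (bFoldChromaticNumber G (t * b) : ℝ) ≤
        (bFoldClusteredChromaticNumber (strongProd G (⊤ : SimpleGraph (Fin t))) b t : ℝ) * t := by
      exact_mod_cast h2
    rw [div_le_div_iff₀ (by positivity) hb']
    push_cast
    nlinarith [mul_le_mul_of_nonneg_right hcast hb'.le]
  · refine le_csInf hA_ne ?_
    rintro y ⟨b, hb, rfl⟩
    have h1 := StmtAux.le_one G t b ht
    have hb' : (0 : ℝ) < b := by exact_mod_cast hb
    refine le_trans (csInf_le hB_bdd ⟨b, hb, rfl⟩) ?_
    have hcast : (bFoldClusteredChromaticNumber (strongProd G (⊤ : SimpleGraph (Fin t))) b t : ℝ)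
        ≤ (bFoldChromaticNumber G b : ℝ) := by exact_mod_cast h1
    gcongr
end
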